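/- Let N ≥ 3, α ∈ [1,2), and C_α > 0. Identify ℝ² with ℂ and set ζ = exp(2πi/(N−1)). Define z_j* = ζ^j for j = 1,…,N−1 and z_N* = 0, with intensities a_j = 1 for j = 1,…,N−1 and a_N = −Σ_{j=1}^{N−2} (1−ζ^j)/|1−ζ^j|^{α+1} (a real number). Then this configuration is a stationary solution of the α-point-vortex system: for every i ∈ {1,…,N}, Σ_{j≠i} a_j K_α(z_i*, z_j*) = 0. -/

import Mathlib

/-- The Biot–Savart kernel `K_α(x,y) = C_α (x−y)^⊥ / |x−y|^{α+1}`, with `ℝ²`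
identified with `ℂ` (so that `v^⊥ = i·v`). -/
noncomputable def biotSavartK (α Cα : ℝ) (x y : ℂ) : ℂ :=
  (Cα / ‖x - y‖ ^ (α + 1)) • (Complex.I * (x - y))

lemma biotSavartK_self (α Cα : ℝ) (x : ℂ) : biotSavartK α Cα x x = 0 := by
  simp [biotSavartK]

/-- Auxiliary summand. -/
noncomputable def gAux (α : ℝ) (ζ : ℂ) (k : ℕ) : ℂ :=
  (1 - ζ ^ k) / ((‖(1 : ℂ) - ζ ^ k‖ ^ (α + 1) : ℝ) : ℂ)

lemma gAux_apply (α : ℝ) (ζ : ℂ) (k : ℕ) :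
    gAux α ζ k = (1 - ζ ^ k) / ((‖(1 : ℂ) - ζ ^ k‖ ^ (α + 1) : ℝ) : ℂ) := rfl

theorem vortex_crystal_stationary
    (N : ℕ) (hN : 3 ≤ N) (α : ℝ) (hα : 1 ≤ α) (hα' : α < 2) (Cα : ℝ) (hCα : 0 < Cα) :
    ∃ aN : ℝ,
      (aN : ℂ) = -∑ j ∈ Finset.Icc 1 (N - 2),
          (1 - Complex.exp (2 * Real.pi * Complex.I / (N - 1)) ^ j) /
            ((‖(1 : ℂ) - Complex.exp (2 * Real.pi * Complex.I / (N - 1)) ^ j‖ ^ (α + 1) : ℝ) : ℂ) ∧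
      (∀ i : Fin N,
        ∑ j ∈ Finset.univ.erase i,
          (if (j : ℕ) = N - 1 then aN else 1) •
            biotSavartK α Cα
              (if (i : ℕ) = N - 1 then 0 else Complex.exp (2 * Real.pi * Complex.I / (N - 1)) ^ ((i : ℕ) + 1))
              (if (j : ℕ) = N - 1 then 0 else Complex.exp (2 * Real.pi * Complex.I / (N - 1)) ^ ((j : ℕ) + 1))
          = 0) := by
  classical
  set ζ : ℂ := Complex.exp (2 * Real.pi * Complex.I / (N - 1)) with hζdef
  set M : ℕ := N - 1 with hMdef
  have hM2 : 2 ≤ M := by omega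
  have hM0 : M ≠ 0 := by omega
  have hcast : ((M : ℕ) : ℂ) = (N : ℂ) - 1 := by
    have h1 : ((M + 1 : ℕ) : ℂ) = (N : ℂ) := by
      have : M + 1 = N := by omega
      exact_mod_cast congrArg (Nat.cast : ℕ → ℂ) this
    push_cast at h1
    linear_combination h1
  have hζ' : ζ = Complex.exp (2 * Real.pi * Complex.I / (M : ℂ)) := by
    rw [hζdef, hcast]
  have hprim : IsPrimitiveRoot ζ M := by
    rw [hζ']; exact Complex.isPrimitiveRoot_exp M hM0
  have hζM : ζ ^ M = 1 := hprim.pow_eq_one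
  have hnorm : ‖ζ‖ = 1 := by
    rw [hζ', show (2 * (Real.pi : ℂ) * Complex.I / (M : ℂ))
        = ((2 * Real.pi / (M : ℝ) : ℝ) : ℂ) * Complex.I by push_cast; ring]
    exact Complex.norm_exp_ofReal_mul_I _
  have hnormpow : ∀ n : ℕ, ‖ζ ^ n‖ = 1 := by
    intro n; rw [norm_pow, hnorm, one_pow]
  have hζne : ∀ k : ℕ, ζ ^ k ≠ 0 := fun k => pow_ne_zero _ (Complex.exp_ne_zero _)
  -- conjugation of powers
  have hconjpow : ∀ k, k ≤ M → (starRingEnd ℂ) (ζ ^ k) = ζ ^ (M - k) := by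
    intro k hk
    have h1 : (starRingEnd ℂ) (ζ ^ k) * ζ ^ k = 1 := by
      rw [mul_comm, Complex.mul_conj]
      norm_cast
      rw [Complex.normSq_eq_norm_sq, hnormpow, one_pow]
    have h2 : ζ ^ (M - k) * ζ ^ k = 1 := by
      rw [← pow_add, show M - k + k = M by omega, hζM]
    exact mul_right_cancel₀ (hζne k) (h1.trans h2.symm)
  set S : ℂ := ∑ k ∈ Finset.Icc 1 (M - 1), gAux α ζ k with hS
  have hgsym : ∀ k ∈ Finset.Icc 1 (M - 1), (starRingEnd ℂ) (gAux α ζ k) = gAux α ζ (M - k) := by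
    intro k hk
    simp only [Finset.mem_Icc] at hk
    have hconj1 : (starRingEnd ℂ) (1 - ζ ^ k) = 1 - ζ ^ (M - k) := by
      rw [map_sub, map_one, hconjpow k (by omega)]
    have hnormeq : ‖(1 : ℂ) - ζ ^ (M - k)‖ = ‖(1 : ℂ) - ζ ^ k‖ := by
      rw [← hconj1, RCLike.norm_conj]
    rw [gAux_apply, gAux_apply, map_div₀, hconj1, Complex.conj_ofReal, hnormeq]
  have hSreal : ((S.re : ℝ) : ℂ) = S := by
    rw [← Complex.conj_eq_iff_re, hS, map_sum]
    refine Finset.sum_nbij' (fun k => M - k) (fun k => M - k) ?_ ?_ ?_ ?_ ?_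
    · intro a ha; simp only [Finset.mem_Icc] at ha ⊢; omega
    · intro a ha; simp only [Finset.mem_Icc] at ha ⊢; omega
    · intro a ha; simp only [Finset.mem_Icc] at ha; show M - (M - a) = a; omega
    · intro a ha; simp only [Finset.mem_Icc] at ha; show M - (M - a) = a; omega
    · intro a ha; exact hgsym a ha
  have hrangeS : ∑ k ∈ Finset.range M, gAux α ζ k = S := by
    have hins : Finset.range M = insert 0 (Finset.Icc 1 (M - 1)) := by
      ext x; simp only [Finset.mem_range, Finset.mem_insert, Finset.mem_Icc]; omega
    rw [hins, Finset.sum_insert (by simp), hS]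
    simp [gAux_apply]
  have hgeom : ∑ n ∈ Finset.range M, ζ ^ n = 0 := hprim.geom_sum_eq_zero (by omega)
  refine ⟨-S.re, ?_, ?_⟩
  · push_cast
    rw [hSreal, show N - 2 = M - 1 by omega, hS]
    exact congrArg Neg.neg (Finset.sum_congr rfl fun j _ => gAux_apply α ζ j)
  · intro i
    have hiN : (i : ℕ) < M + 1 := by have := i.isLt; omega
    rw [Finset.sum_erase_eq_sub (Finset.mem_univ i)]
    by_cases hi : (i : ℕ) = M
    · -- center vortex
      simp only [hi, reduceIte]
      have hU : (∑ j : Fin N, (if (j : ℕ) = M then -S.re else 1) •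
            biotSavartK α Cα 0 (if (j : ℕ) = M then 0 else ζ ^ ((j : ℕ) + 1)))
          = ∑ n ∈ Finset.range N, ((if n = M then -S.re else 1) •
            biotSavartK α Cα 0 (if n = M then 0 else ζ ^ (n + 1))) :=
        Fin.sum_univ_eq_sum_range
          (fun n => (if n = M then -S.re else 1) •
            biotSavartK α Cα 0 (if n = M then 0 else ζ ^ (n + 1))) N
      rw [biotSavartK_self, smul_zero, sub_zero, hU, show N = M + 1 by omega,
        Finset.sum_range_succ]
      simp only [reduceIte]
      rw [biotSavartK_self, smul_zero, add_zero]
      have hterm : ∀ n ∈ Finset.range M,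
          ((if n = M then -S.re else 1) • biotSavartK α Cα 0 (if n = M then 0 else ζ ^ (n + 1)))
          = (-(Cα : ℂ) * Complex.I * ζ) * ζ ^ n := by
        intro n hn
        simp only [Finset.mem_range] at hn
        rw [if_neg (by omega), if_neg (by omega), one_smul, biotSavartK]
        rw [show ((0 : ℂ) - ζ ^ (n + 1)) = -(ζ ^ (n + 1)) by ring, norm_neg, hnormpow,
          Real.one_rpow, Complex.real_smul]
        push_cast
        rw [pow_succ]
        ring
      rw [Finset.sum_congr rfl hterm, ← Finset.mul_sum, hgeom, mul_zero]
    · -- polygon vortex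
      set m : ℕ := (i : ℕ) with hm
      have hmM : m < M := by omega
      simp only [if_neg hi]
      set w : ℂ := ζ ^ (m + 1) with hw
      rw [one_smul, biotSavartK_self, sub_zero]
      have hU : (∑ j : Fin N, (if (j : ℕ) = M then -S.re else 1) •
            biotSavartK α Cα w (if (j : ℕ) = M then 0 else ζ ^ ((j : ℕ) + 1)))
          = ∑ n ∈ Finset.range N, ((if n = M then -S.re else 1) •
            biotSavartK α Cα w (if n = M then 0 else ζ ^ (n + 1))) :=
        Fin.sum_univ_eq_sum_range
          (fun n => (if n = M then -S.re else 1) •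
            biotSavartK α Cα w (if n = M then 0 else ζ ^ (n + 1))) N
      rw [hU, show N = M + 1 by omega, Finset.sum_range_succ]
      simp only [reduceIte]
      have hterm : ∀ n ∈ Finset.range M,
          ((if n = M then -S.re else 1) • biotSavartK α Cα w (if n = M then 0 else ζ ^ (n + 1)))
          = ((Cα : ℂ) * (Complex.I * w)) * gAux α ζ ((n + (M - m)) % M) := by
        intro n hn
        simp only [Finset.mem_range] at hn
        rw [if_neg (by omega), if_neg (by omega), one_smul]
        set k : ℕ := (n + (M - m)) % M with hk
        have hkM : k < M := Nat.mod_lt _ (by omega)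
        have hzk : ζ ^ (n + 1) = w * ζ ^ k := by
          rcases le_or_gt m n with hcase | hcase
          · have hkeq : k = n - m := by
              rw [hk, show n + (M - m) = (n - m) + M by omega, Nat.add_mod_right,
                Nat.mod_eq_of_lt (by omega)]
            rw [hkeq, hw, ← pow_add, show m + 1 + (n - m) = n + 1 by omega]
          · have hkeq : k = n + (M - m) := Nat.mod_eq_of_lt (by omega)
            rw [hkeq, hw, ← pow_add, show m + 1 + (n + (M - m)) = (n + 1) + M by omega,
              pow_add ζ (n + 1) M, hζM, mul_one]
        have hsub : w - ζ ^ (n + 1) = w * (1 - ζ ^ k) := by rw [hzk]; ring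
        have hnrm : ‖w - ζ ^ (n + 1)‖ = ‖(1 : ℂ) - ζ ^ k‖ := by
          rw [hsub, norm_mul, hw, hnormpow, one_mul]
        rw [biotSavartK, hnrm, hsub, Complex.real_smul, gAux_apply]
        push_cast
        ring
      rw [Finset.sum_congr rfl hterm, ← Finset.mul_sum]
      have hreindex : ∑ n ∈ Finset.range M, gAux α ζ ((n + (M - m)) % M)
          = ∑ k ∈ Finset.range M, gAux α ζ k := by
        refine Finset.sum_nbij' (fun n => (n + (M - m)) % M) (fun k => (k + m) % M)
          ?_ ?_ ?_ ?_ ?_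
        · intro a ha; simp only [Finset.mem_range] at ha ⊢; exact Nat.mod_lt _ (by omega)
        · intro a ha; simp only [Finset.mem_range] at ha ⊢; exact Nat.mod_lt _ (by omega)
        · intro a ha
          simp only [Finset.mem_range] at ha
          show ((a + (M - m)) % M + m) % M = a
          rw [Nat.mod_add_mod, show a + (M - m) + m = a + M by omega, Nat.add_mod_right,
            Nat.mod_eq_of_lt ha]
        · intro a ha
          simp only [Finset.mem_range] at ha
          show ((a + m) % M + (M - m)) % M = a
          rw [Nat.mod_add_mod, show a + m + (M - m) = a + M by omega, Nat.add_mod_right,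
            Nat.mod_eq_of_lt ha]
        · intro a _; rfl
      rw [hreindex, hrangeS]
      -- the central vortex contribution
      have hcenter : (-S.re) • biotSavartK α Cα w 0 = -(S * ((Cα : ℂ) * (Complex.I * w))) := by
        rw [biotSavartK, sub_zero, hw, hnormpow, Real.one_rpow, div_one,
          Complex.real_smul, Complex.real_smul]
        push_cast
        rw [hSreal]
        ring
      rw [hcenter]
      ring
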